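/- Let 𝔸 : ℝ² → ℝ² be continuously differentiable, Λ-periodic and odd (𝔸(−x) = −𝔸(x)). Let φ : ℝ² → ℂ be continuously differentiable, ξ⋆^A-quasiperiodic, with φ(Rx) = τ·φ(x) for all x ∈ ℝ². Define ψ(x) := φ(−x). Then ψ is ξ⋆^B-quasiperiodic, satisfies ψ(Rx) = τ·ψ(x) for all x, and ∫_𝕃 conj(ψ)·(𝕎ψ) dx = ∫_𝕃 conj(φ)·(𝕎φ) dx. (Hence the coefficients θ⋆^A := ∫_𝕃 conj(φ)(𝕎φ) and θ⋆^B := ∫_𝕃 conj(ψ)(𝕎ψ) attached to the two Dirac momenta coincide.) -/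

import Mathlib

open MeasureTheory

/-- The Euclidean inner product on `ℝ²`. -/
def dot2 (x y : ℝ × ℝ) : ℝ := x.1 * y.1 + x.2 * y.2

/-- `f` is `ξ`-quasiperiodic with respect to the lattice `ℤv₁ + ℤv₂`. -/
def Quasiperiodic (v₁ v₂ ξ : ℝ × ℝ) (f : ℝ × ℝ → ℂ) : Prop :=
  ∀ (x : ℝ × ℝ) (m n : ℤ),
    f (x + ((m : ℝ) • v₁ + (n : ℝ) • v₂)) =
      Complex.exp (Complex.I * (dot2 ξ ((m : ℝ) • v₁ + (n : ℝ) • v₂) : ℂ)) * f x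

/-- The fundamental cell `𝕃 = {s₁v₁ + s₂v₂ : s₁, s₂ ∈ [0,1)}`. -/
def cell (v₁ v₂ : ℝ × ℝ) : Set (ℝ × ℝ) :=
  {x | ∃ s₁ s₂ : ℝ, s₁ ∈ Set.Ico (0 : ℝ) 1 ∧ s₂ ∈ Set.Ico (0 : ℝ) 1 ∧
    x = s₁ • v₁ + s₂ • v₂}

/-- Generator `v₁ = a(√3, 1)` of the equilateral lattice. -/
noncomputable def hex1 (a : ℝ) : ℝ × ℝ := (Real.sqrt 3 * a, a)

/-- Generator `v₂ = a(√3, −1)` of the equilateral lattice. -/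
noncomputable def hex2 (a : ℝ) : ℝ × ℝ := (Real.sqrt 3 * a, -a)

/-- The rotation `R` by `2π/3`. -/
noncomputable def Rot (x : ℝ × ℝ) : ℝ × ℝ :=
  ((-x.1 + Real.sqrt 3 * x.2) / 2, (-(Real.sqrt 3) * x.1 - x.2) / 2)

/-- `τ = e^{2πi/3}`. -/
noncomputable def tau3 : ℂ := Complex.exp (2 * Real.pi * Complex.I / 3)

/-- Divergence of a vector field `𝔸 : ℝ² → ℝ²`. -/
noncomputable def divA (𝔸 : ℝ × ℝ → ℝ × ℝ) (x : ℝ × ℝ) : ℝ :=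
  fderiv ℝ (fun y => (𝔸 y).1) x ((1 : ℝ), (0 : ℝ)) +
    fderiv ℝ (fun y => (𝔸 y).2) x ((0 : ℝ), (1 : ℝ))

/-- The magnetic operator `𝕎 = 𝔸·D_x + D_x·𝔸 = (2/i) 𝔸·∇ + (1/i)(div 𝔸)`. -/
noncomputable def Wop (𝔸 : ℝ × ℝ → ℝ × ℝ) (φ : ℝ × ℝ → ℂ) (x : ℝ × ℝ) : ℂ :=
  (2 / Complex.I) * fderiv ℝ φ x (𝔸 x) + (1 / Complex.I) * (divA 𝔸 x : ℂ) * φ x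

/- ### Auxiliary lemmas -/

lemma dot2_smul_add (k u v : ℝ × ℝ) (s t : ℝ) :
    dot2 k (s • u + t • v) = s * dot2 k u + t * dot2 k v := by
  simp [dot2, Prod.smul_fst, Prod.smul_snd, smul_eq_mul]; ring

lemma dot2_add (k x y : ℝ × ℝ) : dot2 k (x + y) = dot2 k x + dot2 k y := by
  simp [dot2]; ring

lemma dot2_sub (k x y : ℝ × ℝ) : dot2 k (x - y) = dot2 k x - dot2 k y := by
  simp [dot2]; ring

noncomputable def dotL (k : ℝ × ℝ) : (ℝ × ℝ) →ₗ[ℝ] ℝ where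
  toFun := fun x => dot2 k x
  map_add' := by intro x y; simp [dot2]; ring
  map_smul' := by intro c x; simp [dot2]; ring

lemma line_null (k v : ℝ × ℝ) (hv : dot2 k v = 1) (c : ℝ) :
    volume {x : ℝ × ℝ | dot2 k x = c} = 0 := by
  set A : AffineSubspace ℝ (ℝ × ℝ) :=
    AffineSubspace.comap (dotL k).toAffineMap (AffineSubspace.mk' c (⊥ : Submodule ℝ ℝ)) with hA
  have hmem : ∀ x : ℝ × ℝ, x ∈ A ↔ dot2 k x = c := by
    intro x
    simp [hA, AffineSubspace.mem_comap, AffineSubspace.mem_mk', dotL,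
      sub_eq_zero]
  have hset : {x : ℝ × ℝ | dot2 k x = c} = (A : Set (ℝ × ℝ)) := by
    ext x
    simp only [Set.mem_setOf_eq, SetLike.mem_coe]
    exact (hmem x).symm
  rw [hset]
  apply Measure.addHaar_affineSubspace
  intro htop
  have h1 : (c + 1) • v ∈ A := htop ▸ AffineSubspace.mem_top ℝ _ _
  have := (hmem _).1 h1
  rw [show dot2 k ((c+1) • v) = (c+1) * dot2 k v by simp [dot2]; ring, hv] at this
  linarith

lemma decomp (a : ℝ) (k₁ k₂ : ℝ × ℝ)
    (hk11 : dot2 k₁ (hex1 a) = 1) (hk12 : dot2 k₁ (hex2 a) = 0)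
    (hk21 : dot2 k₂ (hex1 a) = 0) (hk22 : dot2 k₂ (hex2 a) = 1)
    (x : ℝ × ℝ) :
    x = dot2 k₁ x • hex1 a + dot2 k₂ x • hex2 a := by
  have hs : Real.sqrt 3 * Real.sqrt 3 = 3 := Real.mul_self_sqrt (by norm_num)
  simp only [dot2, hex1, hex2] at hk11 hk12 hk21 hk22 ⊢
  have hp1 : k₁.1 * (Real.sqrt 3 * a) = 1/2 := by linarith
  have hq1 : k₁.2 * a = 1/2 := by linarith
  have hp2 : k₂.1 * (Real.sqrt 3 * a) = 1/2 := by linarith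
  have hq2 : k₂.2 * a = -1/2 := by linarith
  have h1 : (k₁.1 * x.1 + k₁.2 * x.2) * (Real.sqrt 3 * a)
      + (k₂.1 * x.1 + k₂.2 * x.2) * (Real.sqrt 3 * a) = x.1 := by
    linear_combination x.1*hp1 + x.1*hp2 + (Real.sqrt 3*x.2)*hq1 + (Real.sqrt 3*x.2)*hq2
  have h2 : (k₁.1 * x.1 + k₁.2 * x.2) * a
      + (k₂.1 * x.1 + k₂.2 * x.2) * (-a) = x.2 := by
    linear_combination (x.1*Real.sqrt 3/3)*hp1 - (x.1*Real.sqrt 3/3)*hp2 + x.2*hq1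
      - x.2*hq2 + (-(x.1*a*(k₁.1-k₂.1))/3)*hs
  ext
  · simpa using h1.symm
  · simp; linarith [h2]

lemma mem_cell_iff (a : ℝ) (k₁ k₂ : ℝ × ℝ)
    (hk11 : dot2 k₁ (hex1 a) = 1) (hk12 : dot2 k₁ (hex2 a) = 0)
    (hk21 : dot2 k₂ (hex1 a) = 0) (hk22 : dot2 k₂ (hex2 a) = 1)
    (x : ℝ × ℝ) :
    x ∈ cell (hex1 a) (hex2 a) ↔
      dot2 k₁ x ∈ Set.Ico (0:ℝ) 1 ∧ dot2 k₂ x ∈ Set.Ico (0:ℝ) 1 := by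
  constructor
  · rintro ⟨s₁, s₂, h₁, h₂, rfl⟩
    rw [dot2_smul_add, dot2_smul_add, hk11, hk12, hk21, hk22]
    constructor <;> simpa
  · rintro ⟨h₁, h₂⟩
    exact ⟨_, _, h₁, h₂, decomp a k₁ k₂ hk11 hk12 hk21 hk22 x⟩

lemma dot2_lattice (k₁ k₂ v₁ v₂ : ℝ × ℝ)
    (h11 : dot2 k₁ v₁ = 1) (h12 : dot2 k₁ v₂ = 0)
    (h21 : dot2 k₂ v₁ = 0) (h22 : dot2 k₂ v₂ = 1) (c α β s t : ℝ) :
    dot2 (c • (α • k₁ + β • k₂)) (s • v₁ + t • v₂) = c * (α * s + β * t) := by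
  simp only [dot2, Prod.smul_fst, Prod.smul_snd, Prod.fst_add, Prod.snd_add,
    smul_eq_mul] at h11 h12 h21 h22 ⊢
  linear_combination (c*α*s)*h11 + (c*α*t)*h12 + (c*β*s)*h21 + (c*β*t)*h22

lemma fderiv_odd_scalar (f : ℝ × ℝ → ℝ) (hf : Differentiable ℝ f)
    (hodd : ∀ y, f (-y) = -f y) (x e : ℝ × ℝ) :
    fderiv ℝ f x e = fderiv ℝ f (-x) e := by
  have hneg : HasFDerivAt (fun y : ℝ × ℝ => -y)
      (-(ContinuousLinearMap.id ℝ (ℝ × ℝ))) x := (hasFDerivAt_id x).neg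
  have h1 : HasFDerivAt (fun y => f (-y))
      ((fderiv ℝ f (-x)).comp (-(ContinuousLinearMap.id ℝ (ℝ × ℝ)))) x :=
    (hf (-x)).hasFDerivAt.comp x hneg
  have h2 : HasFDerivAt (fun y => -f (-y))
      (-((fderiv ℝ f (-x)).comp (-(ContinuousLinearMap.id ℝ (ℝ × ℝ))))) x := h1.neg
  have h3 : (fun y => -f (-y)) = f := funext fun y => by rw [hodd y, neg_neg]
  rw [h3] at h2
  rw [h2.fderiv]
  simp

lemma divA_even (𝔸 : ℝ × ℝ → ℝ × ℝ) (h𝔸C1 : ContDiff ℝ 1 𝔸)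
    (h𝔸odd : ∀ x, 𝔸 (-x) = -𝔸 x) (x : ℝ × ℝ) : divA 𝔸 x = divA 𝔸 (-x) := by
  have hd := h𝔸C1.differentiable one_ne_zero
  have h1 : ∀ y : ℝ × ℝ, (𝔸 (-y)).1 = -(𝔸 y).1 := fun y => by rw [h𝔸odd y]; rfl
  have h2 : ∀ y : ℝ × ℝ, (𝔸 (-y)).2 = -(𝔸 y).2 := fun y => by rw [h𝔸odd y]; rfl
  unfold divA
  rw [fderiv_odd_scalar (fun y => (𝔸 y).1) (fun y => (hd y).fst) h1,
      fderiv_odd_scalar (fun y => (𝔸 y).2) (fun y => (hd y).snd) h2]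

lemma wop_parity (𝔸 : ℝ × ℝ → ℝ × ℝ) (h𝔸C1 : ContDiff ℝ 1 𝔸)
    (h𝔸odd : ∀ x, 𝔸 (-x) = -𝔸 x) (φ : ℝ × ℝ → ℂ) (hφC1 : ContDiff ℝ 1 φ)
    (ψ : ℝ × ℝ → ℂ) (hψ : ∀ x, ψ x = φ (-x)) (x : ℝ × ℝ) :
    Wop 𝔸 ψ x = Wop 𝔸 φ (-x) := by
  have hφd := hφC1.differentiable one_ne_zero
  have hneg : HasFDerivAt (fun y : ℝ × ℝ => -y)
      (-(ContinuousLinearMap.id ℝ (ℝ × ℝ))) x := (hasFDerivAt_id x).neg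
  have h1 : HasFDerivAt (fun y => φ (-y))
      ((fderiv ℝ φ (-x)).comp (-(ContinuousLinearMap.id ℝ (ℝ × ℝ)))) x :=
    (hφd (-x)).hasFDerivAt.comp x hneg
  have hψf : ψ = fun y => φ (-y) := funext hψ
  rw [← hψf] at h1
  have hder : fderiv ℝ ψ x (𝔸 x) = fderiv ℝ φ (-x) (𝔸 (-x)) := by
    rw [h1.fderiv]; simp [h𝔸odd x]
  unfold Wop
  rw [hder, hψ x, ← divA_even 𝔸 h𝔸C1 h𝔸odd x]

lemma fderiv_translate {E F : Type*} [NormedAddCommGroup E] [NormedSpace ℝ E]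
    [NormedAddCommGroup F] [NormedSpace ℝ F]
    (f : E → F) (hf : Differentiable ℝ f) (w x : E) :
    HasFDerivAt (fun y => f (y + w)) (fderiv ℝ f (x + w)) x := by
  have h0 : HasFDerivAt (fun y : E => y + w) (ContinuousLinearMap.id ℝ E) x :=
    (hasFDerivAt_id x).add_const w
  have := (hf (x + w)).hasFDerivAt.comp x h0
  simpa [Function.comp_def] using this

lemma scalar_periodic_integrand (𝔸 : ℝ × ℝ → ℝ × ℝ) (h𝔸C1 : ContDiff ℝ 1 𝔸)
    (φ : ℝ × ℝ → ℂ) (hφC1 : ContDiff ℝ 1 φ) (w : ℝ × ℝ) (r : ℝ)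
    (h𝔸w : ∀ y, 𝔸 (y + w) = 𝔸 y)
    (hφw : ∀ y, φ (y + w) = Complex.exp (Complex.I * r) * φ y) (y : ℝ × ℝ) :
    (starRingEnd ℂ) (φ (y + w)) * Wop 𝔸 φ (y + w)
      = (starRingEnd ℂ) (φ y) * Wop 𝔸 φ y := by
  set c : ℂ := Complex.exp (Complex.I * r) with hc
  have hφd := hφC1.differentiable one_ne_zero
  have h𝔸d := h𝔸C1.differentiable one_ne_zero
  have h1 : HasFDerivAt (fun z => φ (z + w)) (fderiv ℝ φ (y + w)) y :=
    fderiv_translate φ hφd w y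
  have h2 : HasFDerivAt (fun z => c * φ z) (c • fderiv ℝ φ y) y :=
    (hφd y).hasFDerivAt.const_mul c
  have heq : (fun z => φ (z + w)) = fun z => c * φ z := funext fun z => hφw z
  rw [heq] at h1
  have hder : fderiv ℝ φ (y + w) = c • fderiv ℝ φ y := h1.unique h2
  have hdiv : divA 𝔸 (y + w) = divA 𝔸 y := by
    have t1 : HasFDerivAt (fun z => (𝔸 (z + w)).1)
        (fderiv ℝ (fun z => (𝔸 z).1) (y + w)) y :=
      fderiv_translate _ (fun z => (h𝔸d z).fst) w y
    have t2 : HasFDerivAt (fun z => (𝔸 (z + w)).2)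
        (fderiv ℝ (fun z => (𝔸 z).2) (y + w)) y :=
      fderiv_translate _ (fun z => (h𝔸d z).snd) w y
    have e1 : (fun z => (𝔸 (z + w)).1) = fun z => (𝔸 z).1 :=
      funext fun z => by rw [h𝔸w z]
    have e2 : (fun z => (𝔸 (z + w)).2) = fun z => (𝔸 z).2 :=
      funext fun z => by rw [h𝔸w z]
    rw [e1] at t1; rw [e2] at t2
    unfold divA
    rw [t1.fderiv, t2.fderiv]
  have hcc : (starRingEnd ℂ) c * c = 1 := by
    rw [hc, ← Complex.exp_conj, ← Complex.exp_add]
    simp [Complex.conj_I, mul_comm]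
  unfold Wop
  rw [hder, hφw y, hdiv, h𝔸w y]
  simp only [ContinuousLinearMap.smul_apply, smul_eq_mul, map_mul]
  linear_combination ((starRingEnd ℂ) (φ y) * Complex.I⁻¹ * (fderiv ℝ φ y) (𝔸 y) * 2
    + (starRingEnd ℂ) (φ y) * Complex.I⁻¹ * (divA 𝔸 y : ℂ) * φ y) * hcc

/-- In the magnetic case, inversion maps Dirac data at `ξ⋆^A` to Dirac data at `ξ⋆^B`
and preserves the coefficient `θ⋆`, so that `θ⋆^A = θ⋆^B`. -/
theorem stmt8 (a : ℝ) (ha : 0 < a) (hdet : 2 * Real.sqrt 3 * a ^ 2 = 1)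
    (k₁ k₂ : ℝ × ℝ)
    (hk11 : dot2 k₁ (hex1 a) = 1) (hk12 : dot2 k₁ (hex2 a) = 0)
    (hk21 : dot2 k₂ (hex1 a) = 0) (hk22 : dot2 k₂ (hex2 a) = 1)
    (𝔸 : ℝ × ℝ → ℝ × ℝ) (h𝔸C1 : ContDiff ℝ 1 𝔸)
    (h𝔸per : ∀ (x : ℝ × ℝ) (m n : ℤ),
      𝔸 (x + ((m : ℝ) • hex1 a + (n : ℝ) • hex2 a)) = 𝔸 x)
    (h𝔸odd : ∀ x, 𝔸 (-x) = -𝔸 x)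
    (φ : ℝ × ℝ → ℂ) (hφC1 : ContDiff ℝ 1 φ)
    (hφqp : Quasiperiodic (hex1 a) (hex2 a)
      ((2 * Real.pi / 3) • ((2 : ℝ) • k₁ + k₂)) φ)
    (hφrot : ∀ x, φ (Rot x) = tau3 * φ x)
    (ψ : ℝ × ℝ → ℂ) (hψ : ∀ x, ψ x = φ (-x)) :
    Quasiperiodic (hex1 a) (hex2 a) ((2 * Real.pi / 3) • (k₁ + (2 : ℝ) • k₂)) ψ ∧
    (∀ x, ψ (Rot x) = tau3 * ψ x) ∧
    (∫ x in cell (hex1 a) (hex2 a), (starRingEnd ℂ) (ψ x) * Wop 𝔸 ψ x) =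
      ∫ x in cell (hex1 a) (hex2 a), (starRingEnd ℂ) (φ x) * Wop 𝔸 φ x := by
  set v₁ : ℝ × ℝ := hex1 a with hv₁
  set v₂ : ℝ × ℝ := hex2 a with hv₂
  refine ⟨?_, ?_, ?_⟩
  · -- quasiperiodicity of ψ
    intro x m n
    rw [hψ, hψ]
    have hx : -(x + ((m:ℝ) • v₁ + (n:ℝ) • v₂))
        = -x + ((((-m : ℤ)):ℝ) • v₁ + (((-n : ℤ)):ℝ) • v₂) := by
      push_cast; module
    rw [hx, hφqp (-x) (-m) (-n)]
    have dA : dot2 ((2 * Real.pi / 3) • ((2:ℝ) • k₁ + k₂))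
        ((((-m : ℤ)):ℝ) • v₁ + (((-n : ℤ)):ℝ) • v₂)
        = 2 * Real.pi / 3 * (2 * (((-m : ℤ)):ℝ) + 1 * (((-n : ℤ)):ℝ)) := by
      rw [show (2:ℝ) • k₁ + k₂ = (2:ℝ) • k₁ + (1:ℝ) • k₂ by rw [one_smul]]
      exact dot2_lattice k₁ k₂ v₁ v₂ hk11 hk12 hk21 hk22 _ _ _ _ _
    have dB : dot2 ((2 * Real.pi / 3) • (k₁ + (2:ℝ) • k₂))
        ((m:ℝ) • v₁ + (n:ℝ) • v₂)
        = 2 * Real.pi / 3 * (1 * (m:ℝ) + 2 * (n:ℝ)) := by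
      rw [show k₁ + (2:ℝ) • k₂ = (1:ℝ) • k₁ + (2:ℝ) • k₂ by rw [one_smul]]
      exact dot2_lattice k₁ k₂ v₁ v₂ hk11 hk12 hk21 hk22 _ _ _ _ _
    rw [dA, dB]
    congr 1
    rw [show (Complex.I * ((2 * Real.pi / 3 * (1 * (m:ℝ) + 2 * (n:ℝ)) : ℝ) : ℂ))
        = Complex.I * ((2 * Real.pi / 3 * (2 * (((-m : ℤ)):ℝ) + 1 * (((-n : ℤ)):ℝ)) : ℝ) : ℂ)
          + ((m + n : ℤ) : ℂ) * (2 * (Real.pi : ℂ) * Complex.I) by push_cast; ring,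
      Complex.exp_add, Complex.exp_int_mul_two_pi_mul_I, mul_one]
  · -- rotation eigenfunction property of ψ
    intro x
    have hR : -Rot x = Rot (-x) := by
      unfold Rot; ext <;> simp <;> ring
    rw [hψ, hR, hφrot, ← hψ]
  · -- equality of the coefficients
    set w : ℝ × ℝ := v₁ + v₂ with hw
    set g : ℝ × ℝ → ℂ := fun y => (starRingEnd ℂ) (φ y) * Wop 𝔸 φ y with hg
    have h𝔸w : ∀ y, 𝔸 (y + w) = 𝔸 y := by
      intro y
      have := h𝔸per y 1 1
      simpa using this
    have hφw : ∀ y, φ (y + w) = Complex.exp (Complex.I * (dot2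
        ((2 * Real.pi / 3) • ((2:ℝ) • k₁ + k₂)) w : ℝ)) * φ y := by
      intro y
      have := hφqp y 1 1
      simpa using this
    have hper : ∀ y, g (y + w) = g y := fun y =>
      scalar_periodic_integrand 𝔸 h𝔸C1 φ hφC1 w _ h𝔸w hφw y
    have step1 : ∀ x, (starRingEnd ℂ) (ψ x) * Wop 𝔸 ψ x = g (w - x) := by
      intro x
      have e1 : (starRingEnd ℂ) (ψ x) * Wop 𝔸 ψ x = g (-x) := by
        rw [hψ, wop_parity 𝔸 h𝔸C1 h𝔸odd φ hφC1 ψ hψ x]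
      rw [e1, show w - x = -x + w from sub_eq_neg_add w x, hper (-x)]
    -- change of variables x ↦ w - x
    set σ : ℝ × ℝ → ℝ × ℝ := fun x => w - x with hσ
    have hσeq : σ = ⇑((MeasurableEquiv.neg (ℝ × ℝ)).trans (MeasurableEquiv.addLeft w)) := by
      ext x <;> simp [hσ, sub_eq_add_neg]
    have hσemb : MeasurableEmbedding σ := by
      rw [hσeq]; exact (MeasurableEquiv.measurableEmbedding _)
    have hσmp : MeasurePreserving σ (volume : Measure (ℝ × ℝ)) volume := by
      have : MeasurePreserving (fun x : ℝ × ℝ => w + -x) volume volume :=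
        (measurePreserving_add_left volume w).comp (Measure.measurePreserving_neg volume)
      have hfe : σ = fun x : ℝ × ℝ => w + -x := funext fun x => by
        simp [hσ, sub_eq_add_neg]
      rw [hfe]; exact this
    set S : Set (ℝ × ℝ) := cell v₁ v₂ with hS
    have hinv : σ ⁻¹' (σ ⁻¹' S) = S := by
      ext x; simp [hσ]
    have key : (∫ x in S, g (σ x)) = ∫ y in σ ⁻¹' S, g y := by
      conv_lhs => rw [← hinv]
      exact hσmp.setIntegral_preimage_emb hσemb g (σ ⁻¹' S)
    -- σ ⁻¹' S is a.e. equal to S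
    have hd2w1 : dot2 k₁ w = 1 := by rw [hw, dot2_add, hk11, hk12]; ring
    have hd2w2 : dot2 k₂ w = 1 := by rw [hw, dot2_add, hk21, hk22]; ring
    have hmem : ∀ x : ℝ × ℝ, x ∈ S ↔
        dot2 k₁ x ∈ Set.Ico (0:ℝ) 1 ∧ dot2 k₂ x ∈ Set.Ico (0:ℝ) 1 :=
      mem_cell_iff a k₁ k₂ hk11 hk12 hk21 hk22
    have hae : σ ⁻¹' S =ᵐ[volume] S := by
      rw [MeasureTheory.ae_eq_set]
      constructor
      · refine measure_mono_null (fun x hx => ?_)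
          (measure_union_null (line_null k₁ v₁ hk11 1) (line_null k₂ v₂ hk22 1))
        obtain ⟨hx1, hx2⟩ := hx
        have h1 := (hmem (σ x)).1 hx1
        rw [hσ] at h1
        simp only [dot2_sub, hd2w1, hd2w2] at h1
        rw [hmem x] at hx2
        by_cases hc1 : dot2 k₁ x = 1
        · exact Or.inl hc1
        · right
          simp only [Set.mem_Ico] at h1
          by_contra hc2
          exact hx2 ⟨⟨by linarith [h1.1.2], lt_of_le_of_ne (by linarith [h1.1.1]) hc1⟩,
            ⟨by linarith [h1.2.2], lt_of_le_of_ne (by linarith [h1.2.1]) hc2⟩⟩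
      · refine measure_mono_null (fun x hx => ?_)
          (measure_union_null (line_null k₁ v₁ hk11 0) (line_null k₂ v₂ hk22 0))
        obtain ⟨hx1, hx2⟩ := hx
        rw [hmem x] at hx1
        have h2 : ¬ (σ x ∈ S) := hx2
        rw [hmem (σ x), hσ] at h2
        simp only [dot2_sub, hd2w1, hd2w2, Set.mem_Ico] at h2
        simp only [Set.mem_Ico] at hx1
        by_cases hc1 : dot2 k₁ x = 0
        · exact Or.inl hc1
        · right
          by_contra hc2
          exact h2 ⟨⟨by linarith [hx1.1.2], by
            have := lt_of_le_of_ne hx1.1.1 (Ne.symm hc1); linarith⟩,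
            ⟨by linarith [hx1.2.2], by
              have := lt_of_le_of_ne hx1.2.1 (Ne.symm hc2); linarith⟩⟩
    calc (∫ x in S, (starRingEnd ℂ) (ψ x) * Wop 𝔸 ψ x)
        = ∫ x in S, g (σ x) := by
          simp only [step1]; rfl
      _ = ∫ y in σ ⁻¹' S, g y := key
      _ = ∫ y in S, g y := setIntegral_congr_set hae
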